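/- For n ≥ 2, the distinguishing number of the friendship graph F_n equals min{k : ∑_{i=2}^{k} (i-1) ≥ n}, i.e., the least k with C(k,2) ≥ n. -/

import Mathlib

open SimpleGraph

/-- A vertex labeling with `d` labels is distinguishing if the only automorphism
preserving it is the identity. -/
def IsDistinguishing {V : Type*} (G : SimpleGraph V) {d : ℕ} (c : V → Fin d) : Prop :=
  ∀ φ : G ≃g G, (∀ v, c (φ v) = c v) → ∀ v, φ v = v

/-- The distinguishing number of a graph. -/
noncomputable def distinguishingNumber {V : Type*} (G : SimpleGraph V) : ℕ :=
  sInf {d : ℕ | ∃ c : V → Fin d, IsDistinguishing G c}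

/-- An edge labeling with `d` labels is distinguishing if the only automorphism
preserving it is the identity. -/
def IsDistinguishingEdge {V : Type*} (G : SimpleGraph V) {d : ℕ} (c : G.edgeSet → Fin d) : Prop :=
  ∀ φ : G ≃g G, (∀ e, c (φ.mapEdgeSet e) = c e) → ∀ v, φ v = v

/-- The distinguishing index of a graph. -/
noncomputable def distinguishingIndex {V : Type*} (G : SimpleGraph V) : ℕ :=
  sInf {d : ℕ | ∃ c : G.edgeSet → Fin d, IsDistinguishingEdge G c}

/-- The friendship graph `F n`: `n` triangles glued at a common central vertex `none`. -/
def friendshipGraph (n : ℕ) : SimpleGraph (Option (Fin n × Fin 2)) :=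
  SimpleGraph.fromRel (fun u v =>
    u = none ∨ ∃ i a b, u = some (i, a) ∧ v = some (i, b))

/-- The book graph `B n = K_{1,n} □ P₂`. -/
def bookGraph (n : ℕ) : SimpleGraph ((Fin 1 ⊕ Fin n) × Fin 2) :=
  (completeBipartiteGraph (Fin 1) (Fin n)) □ (SimpleGraph.pathGraph 2)

/-- The corona product `G ∘ H`: one copy of `G`, a copy of `H` for each vertex `v` of `G`,
with `v` joined to every vertex of its copy of `H`. -/
def coronaProduct {V W : Type*} (G : SimpleGraph V) (H : SimpleGraph W) :
    SimpleGraph (V ⊕ V × W) :=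
  SimpleGraph.fromRel (fun a b =>
    (∃ u v, a = Sum.inl u ∧ b = Sum.inl v ∧ G.Adj u v) ∨
    (∃ v w w', a = Sum.inr (v, w) ∧ b = Sum.inr (v, w') ∧ H.Adj w w') ∨
    (∃ v w, a = Sum.inl v ∧ b = Sum.inr (v, w)))

lemma fg_adj_some {n : ℕ} {i j : Fin n} {a b : Fin 2} :
    (friendshipGraph n).Adj (some (i,a)) (some (j,b)) ↔ (i,a) ≠ (j,b) ∧ i = j := by
  simp only [friendshipGraph, fromRel_adj]
  constructor
  · rintro ⟨h1, h2 | h2⟩ <;> simp_all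
  · rintro ⟨h1, rfl⟩
    exact ⟨by simpa using h1, Or.inl (Or.inr ⟨i, a, b, rfl, rfl⟩)⟩

lemma fg_adj_none {n : ℕ} {x : Fin n × Fin 2} :
    (friendshipGraph n).Adj none (some x) := by
  simp [friendshipGraph, fromRel_adj]

lemma fg_not_adj_none_none {n : ℕ} : ¬ (friendshipGraph n).Adj none none :=
  (friendshipGraph n).loopless.irrefl none

/-- permutation of triangles + flips inside triangles -/
def autF {n : ℕ} (σ : Equiv.Perm (Fin n)) (ε : Fin n → Fin 2) :
    friendshipGraph n ≃g friendshipGraph n where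
  toFun := Option.map (fun p => (σ p.1, p.2 + ε p.1))
  invFun := Option.map (fun p => (σ.symm p.1, p.2 - ε (σ.symm p.1)))
  left_inv := by rintro (_ | ⟨i, a⟩) <;> simp
  right_inv := by rintro (_ | ⟨i, a⟩) <;> simp
  map_rel_iff' := by
    rintro (_ | ⟨i, a⟩) (_ | ⟨j, b⟩)
    · simp [fg_not_adj_none_none]
    · simp [Option.map_some, fg_adj_none]
    · constructor
      · intro _; exact (fg_adj_none).symm
      · intro _; exact (fg_adj_none (x := (σ i, a + ε i))).symm
    · simp only [Option.map_some, fg_adj_some, Equiv.coe_fn_mk]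
      constructor
      · rintro ⟨h1, h2⟩
        have hij : i = j := σ.injective h2
        subst hij
        refine ⟨?_, rfl⟩
        intro h; apply h1
        simp only [Prod.mk.injEq] at h ⊢
        simp [h.2]
      · rintro ⟨h1, rfl⟩
        refine ⟨?_, rfl⟩
        intro h; apply h1
        simp only [Prod.mk.injEq] at h ⊢
        have : a = b := by
          have := h.2
          simpa using congrArg (· - ε i) this
        simp [this]

lemma center_fixed {n : ℕ} (hn : 2 ≤ n) (φ : friendshipGraph n ≃g friendshipGraph n) :
    φ none = none := by
  by_contra h
  obtain ⟨⟨j, b⟩, hj⟩ : ∃ x, φ none = some x := Option.ne_none_iff_exists'.mp h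
  have : Nontrivial (Fin n) := Fin.nontrivial_iff_two_le.mpr hn
  obtain ⟨j', hj'⟩ := exists_ne j
  set v : Option (Fin n × Fin 2) := some (j', 0) with hv
  have hw : φ (φ.symm v) = v := φ.apply_symm_apply v
  have hwn : φ.symm v ≠ none := by
    intro hc
    rw [hc] at hw; rw [hj] at hw
    simp [hv] at hw
    exact hj' hw.1.symm
  obtain ⟨x, hx⟩ := Option.ne_none_iff_exists'.mp hwn
  have hadj : (friendshipGraph n).Adj none (φ.symm v) := by
    rw [hx]; exact fg_adj_none
  have h2 : (friendshipGraph n).Adj (φ none) (φ (φ.symm v)) := φ.map_rel_iff.mpr hadj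
  rw [hj, hw, hv] at h2
  exact hj' (fg_adj_some.mp h2).2.symm

lemma autF_none {n : ℕ} (σ : Equiv.Perm (Fin n)) (ε : Fin n → Fin 2) :
    autF σ ε none = none := rfl

lemma autF_some {n : ℕ} (σ : Equiv.Perm (Fin n)) (ε : Fin n → Fin 2) (i : Fin n) (a : Fin 2) :
    autF σ ε (some (i, a)) = some (σ i, a + ε i) := rfl

lemma lower_bound {n d : ℕ} (hn : 2 ≤ n) (c : Option (Fin n × Fin 2) → Fin d)
    (hc : IsDistinguishing (friendshipGraph n) c) : n ≤ d.choose 2 := by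
  classical
  -- within each triangle, colors differ
  have hne : ∀ i : Fin n, c (some (i, 0)) ≠ c (some (i, 1)) := by
    intro i h
    set φ := autF (n := n) 1 (fun j => if j = i then 1 else 0) with hφ
    have hpres : ∀ v, c (φ v) = c v := by
      rintro (_ | ⟨l, a⟩)
      · rw [hφ, autF_none]
      · rw [hφ, autF_some]
        by_cases hl : l = i
        · subst hl
          simp only [if_pos rfl, Equiv.Perm.one_apply]
          fin_cases a
          · simpa using h.symm
          · simpa using h
        · simp [hl]
    have := hc φ hpres (some (i, 0))
    rw [hφ, autF_some] at this
    simp at this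
  -- the unordered color pairs are pairwise distinct
  have hinj : Function.Injective (fun i : Fin n => s(c (some (i, 0)), c (some (i, 1)))) := by
    intro i j hij
    by_contra hne2
    simp only [Sym2.eq_iff] at hij
    rcases hij with ⟨h1, h2⟩ | ⟨h1, h2⟩
    · set φ := autF (Equiv.swap i j) (fun _ => 0) with hφ
      have hpres : ∀ v, c (φ v) = c v := by
        rintro (_ | ⟨l, a⟩)
        · rw [hφ, autF_none]
        · rw [hφ, autF_some]
          simp only [add_zero]
          by_cases hl : l = i
          · subst hl
            rw [Equiv.swap_apply_left]
            fin_cases a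
            · exact h1.symm
            · exact h2.symm
          · by_cases hl' : l = j
            · subst hl'
              rw [Equiv.swap_apply_right]
              fin_cases a
              · exact h1
              · exact h2
            · rw [Equiv.swap_apply_of_ne_of_ne hl hl']
      have := hc φ hpres (some (i, 0))
      rw [hφ, autF_some, add_zero, Equiv.swap_apply_left] at this
      simp only [Option.some.injEq, Prod.mk.injEq] at this
      exact hne2 this.1.symm
    · set φ := autF (Equiv.swap i j) (fun l => if l = i ∨ l = j then 1 else 0) with hφ
      have hpres : ∀ v, c (φ v) = c v := by
        rintro (_ | ⟨l, a⟩)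
        · rw [hφ, autF_none]
        · rw [hφ, autF_some]
          by_cases hl : l = i
          · subst hl
            rw [Equiv.swap_apply_left, if_pos (Or.inl rfl)]
            fin_cases a
            · simpa using h1.symm
            · simpa using h2.symm
          · by_cases hl' : l = j
            · subst hl'
              rw [Equiv.swap_apply_right, if_pos (Or.inr rfl)]
              fin_cases a
              · simpa using h2
              · simpa using h1
            · rw [Equiv.swap_apply_of_ne_of_ne hl hl']
              simp [hl, hl']
      have := hc φ hpres (some (i, 0))
      rw [hφ, autF_some, Equiv.swap_apply_left] at this
      simp at this
  -- conclude via cardinality of non-diagonal Sym2 elements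
  let G : Fin n → {z : Sym2 (Fin d) // ¬ z.IsDiag} := fun i =>
    ⟨s(c (some (i, 0)), c (some (i, 1))), by simp [Sym2.mk_isDiag_iff, hne i]⟩
  have hGinj : Function.Injective G := by
    intro i j h
    exact hinj (congrArg Subtype.val h)
  calc n = Fintype.card (Fin n) := (Fintype.card_fin n).symm
    _ ≤ Fintype.card {z : Sym2 (Fin d) // ¬ z.IsDiag} := Fintype.card_le_of_injective G hGinj
    _ = (Fintype.card (Fin d)).choose 2 := Sym2.card_subtype_not_diag
    _ = d.choose 2 := by rw [Fintype.card_fin]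

lemma upper_bound {n k : ℕ} (hn : 2 ≤ n) (hk : n ≤ k.choose 2) :
    ∃ c : Option (Fin n × Fin 2) → Fin k, IsDistinguishing (friendshipGraph n) c := by
  classical
  obtain ⟨f⟩ : Nonempty (Fin n ↪ {z : Sym2 (Fin k) // ¬ z.IsDiag}) := by
    apply Function.Embedding.nonempty_of_card_le
    rw [Fintype.card_fin, Sym2.card_subtype_not_diag, Fintype.card_fin]
    exact hk
  have hrep : ∀ i : Fin n, ∃ a b : Fin k, (f i).val = s(a, b) ∧ a ≠ b := by
    intro i
    obtain ⟨z, hz⟩ := f i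
    induction z using Sym2.ind with
    | _ a b => exact ⟨a, b, rfl, fun h => hz (by simp [Sym2.mk_isDiag_iff, h])⟩
  choose A B hAB hABne using hrep
  refine ⟨fun v => match v with
    | none => A ⟨0, by omega⟩
    | some (i, a) => if a = 0 then A i else B i, ?_⟩
  set c : Option (Fin n × Fin 2) → Fin k := fun v => match v with
    | none => A ⟨0, by omega⟩
    | some (i, a) => if a = 0 then A i else B i with hcdef
  have hc0 : ∀ i, c (some (i, 0)) = A i := fun i => by simp [hcdef]
  have hc1 : ∀ i, c (some (i, 1)) = B i := fun i => by simp [hcdef]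
  intro φ hpres
  have hcen : φ none = none := center_fixed hn φ
  have hsome : ∀ x : Fin n × Fin 2, ∃ y, φ (some x) = some y := by
    intro x
    rcases h : φ (some x) with _ | y
    · exact absurd (φ.injective (h.trans hcen.symm)) (by simp)
    · exact ⟨y, rfl⟩
  have key : ∀ i : Fin n, φ (some (i, 0)) = some (i, 0) ∧ φ (some (i, 1)) = some (i, 1) := by
    intro i
    obtain ⟨⟨t0, b0⟩, h0⟩ := hsome (i, 0)
    obtain ⟨⟨t1, b1⟩, h1⟩ := hsome (i, 1)
    have hadj : (friendshipGraph n).Adj (some (i, 0)) (some (i, 1)) :=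
      fg_adj_some.mpr ⟨by simp, rfl⟩
    have hadj' : (friendshipGraph n).Adj (some (t0, b0)) (some (t1, b1)) := by
      rw [← h0, ← h1]; exact φ.map_rel_iff.mpr hadj
    obtain ⟨hne01, ht⟩ := fg_adj_some.mp hadj'
    subst ht
    have hb : b0 ≠ b1 := fun h => hne01 (by rw [h])
    have e0 : c (some (t0, b0)) = A i := by rw [← h0, hpres, hc0]
    have e1 : c (some (t0, b1)) = B i := by rw [← h1, hpres, hc1]
    -- the unordered pair of triangle t0 equals that of triangle i
    have hcase : (b0 = 0 ∧ b1 = 1) ∨ (b0 = 1 ∧ b1 = 0) := by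
      fin_cases b0 <;> fin_cases b1 <;> simp_all
    have hpair : s(A t0, B t0) = s(A i, B i) := by
      rcases hcase with ⟨hb0, hb1⟩ | ⟨hb0, hb1⟩
      · rw [hb0] at e0; rw [hb1] at e1
        rw [← hc0 t0, ← hc1 t0, e0, e1]
      · rw [hb0] at e0; rw [hb1] at e1
        rw [← hc0 t0, ← hc1 t0, e1, e0, Sym2.eq_swap]
    have hti : t0 = i := by
      apply f.injective
      apply Subtype.ext
      rw [hAB, hAB, hpair]
    subst hti
    rcases hcase with ⟨hb0, hb1⟩ | ⟨hb0, hb1⟩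
    · rw [hb0] at h0; rw [hb1] at h1
      exact ⟨h0, h1⟩
    · exfalso
      rw [hb0] at e0
      rw [hc1] at e0
      exact (hABne t0).symm e0
  rintro (_ | ⟨i, a⟩)
  · exact hcen
  · fin_cases a
    · exact (key i).1
    · exact (key i).2

theorem friendship_distinguishingNumber_min (n : ℕ) (hn : 2 ≤ n) :
    distinguishingNumber (friendshipGraph n) = sInf {k : ℕ | n ≤ k.choose 2} := by
  unfold distinguishingNumber
  congr 1
  ext d
  simp only [Set.mem_setOf_eq]
  constructor
  · rintro ⟨c, hc⟩
    exact lower_bound hn c hc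
  · intro h
    exact upper_bound hn h
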